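/- Let (f_0,...,f_{M-1}) be multinomial with n trials and strictly positive probabilities (p_0,...,p_{M-1}) summing to 1, \hat{p}_j = f_j/n, and \hat{H} = -Σ_j \hat{p}_j ln \hat{p}_j (with 0 ln 0 = 0). Then E[\hat{H}] = H - (M-1)/(2n) + (1/(12n^2))(1 - Σ_j 1/p_j) + (1/(12n^3)) Σ_j (1/p_j - 1/p_j^2) + O(n^{-4}), where H = -Σ_j p_j ln p_j. -/

import Mathlib

/-- Probability of the outcome `f` under the multinomial distribution with
`n` trials and cell probabilities `p`. -/
noncomputable def multProb {M : ℕ} (p : Fin M → ℝ) (f : Fin M → ℕ) : ℝ :=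
  (Nat.multinomial Finset.univ f : ℝ) * ∏ j, p j ^ f j

/-- Plug-in (empirical frequencies) Shannon entropy of the outcome `f`
(natural logarithm, convention `0 ln 0 = 0` since `Real.log 0 = 0`). -/
noncomputable def plugInEntropy {M : ℕ} (n : ℕ) (f : Fin M → ℕ) : ℝ :=
  -∑ j, ((f j : ℝ) / (n : ℝ)) * Real.log ((f j : ℝ) / (n : ℝ))

/-- `E[Ĥ]` for the multinomial plug-in entropy estimator. -/
noncomputable def expEntropy (M n : ℕ) (p : Fin M → ℝ) : ℝ :=
  ∑ f ∈ Finset.Nat.antidiagonalTuple M n, multProb p f * plugInEntropy n f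

/-- `Var(Ĥ)` for the multinomial plug-in entropy estimator. -/
noncomputable def varEntropy (M n : ℕ) (p : Fin M → ℝ) : ℝ :=
  (∑ f ∈ Finset.Nat.antidiagonalTuple M n, multProb p f * (plugInEntropy n f) ^ 2)
    - (expEntropy M n p) ^ 2

/-- Shannon entropy of the probability vector `p` (natural logarithm). -/
noncomputable def shannonH {M : ℕ} (p : Fin M → ℝ) : ℝ :=
  -∑ j, p j * Real.log (p j)




-- Auxiliary development
open Finset
set_option maxHeartbeats 2000000


noncomputable def P7 (u : ℝ) : ℝ := u - u^2/2 + u^3/3 - u^4/4 + u^5/5 - u^6/6 + u^7/7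
noncomputable def dcoef (nn p : ℝ) : ℕ → ℝ
  | 0 => (0:ℝ)/(nn^8*p^7)
  | 1 => ((1/7:ℝ) + (-7/6:ℝ)*nn*p + (21/5:ℝ)*nn^2*p^2 + (-35/4:ℝ)*nn^3*p^3 + (35/3:ℝ)*nn^4*p^4 + (-21/2:ℝ)*nn^5*p^5 + (7:ℝ)*nn^6*p^6 + (-363/140:ℝ)*nn^7*p^7)/(nn^8*p^7)
  | 2 => ((127/7:ℝ) + (-147/2:ℝ)*nn*p + (651/5:ℝ)*nn^2*p^2 + (-525/4:ℝ)*nn^3*p^3 + (245/3:ℝ)*nn^4*p^4 + (-63/2:ℝ)*nn^5*p^5 + (7:ℝ)*nn^6*p^6)/(nn^8*p^7)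
  | 3 => ((138:ℝ) + (-2107/6:ℝ)*nn*p + (378:ℝ)*nn^2*p^2 + (-875/4:ℝ)*nn^3*p^3 + (70:ℝ)*nn^4*p^4 + (-21/2:ℝ)*nn^5*p^5)/(nn^8*p^7)
  | 4 => ((243:ℝ) + (-1225/3:ℝ)*nn*p + (273:ℝ)*nn^2*p^2 + (-175/2:ℝ)*nn^3*p^3 + (35/3:ℝ)*nn^4*p^4)/(nn^8*p^7)
  | 5 => ((150:ℝ) + (-490/3:ℝ)*nn*p + (63:ℝ)*nn^2*p^2 + (-35/4:ℝ)*nn^3*p^3)/(nn^8*p^7)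
  | 6 => ((38:ℝ) + (-49/2:ℝ)*nn*p + (21/5:ℝ)*nn^2*p^2)/(nn^8*p^7)
  | 7 => ((4:ℝ) + (-7/6:ℝ)*nn*p)/(nn^8*p^7)
  | 8 => ((1/7:ℝ))/(nn^8*p^7)
  | _ => 0

def acoef (nn p : ℝ) : ℕ → ℝ
  | 0 => ((1:ℝ)*nn^8*p^8)
  | 1 => ((1:ℝ) + (-8:ℝ)*nn*p + (28:ℝ)*nn^2*p^2 + (-56:ℝ)*nn^3*p^3 + (70:ℝ)*nn^4*p^4 + (-56:ℝ)*nn^5*p^5 + (28:ℝ)*nn^6*p^6 + (-8:ℝ)*nn^7*p^7)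
  | 2 => ((127:ℝ) + (-504:ℝ)*nn*p + (868:ℝ)*nn^2*p^2 + (-840:ℝ)*nn^3*p^3 + (490:ℝ)*nn^4*p^4 + (-168:ℝ)*nn^5*p^5 + (28:ℝ)*nn^6*p^6)
  | 3 => ((966:ℝ) + (-2408:ℝ)*nn*p + (2520:ℝ)*nn^2*p^2 + (-1400:ℝ)*nn^3*p^3 + (420:ℝ)*nn^4*p^4 + (-56:ℝ)*nn^5*p^5)
  | 4 => ((1701:ℝ) + (-2800:ℝ)*nn*p + (1820:ℝ)*nn^2*p^2 + (-560:ℝ)*nn^3*p^3 + (70:ℝ)*nn^4*p^4)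
  | 5 => ((1050:ℝ) + (-1120:ℝ)*nn*p + (420:ℝ)*nn^2*p^2 + (-56:ℝ)*nn^3*p^3)
  | 6 => ((266:ℝ) + (-168:ℝ)*nn*p + (28:ℝ)*nn^2*p^2)
  | 7 => ((28:ℝ) + (-8:ℝ)*nn*p)
  | 8 => ((1:ℝ))
  | _ => 0

noncomputable def gcoef (p : ℝ) : ℕ → ℝ
  | 1 => ((1/7:ℝ) + (-127/7:ℝ)*p + (276:ℝ)*p^2 + (-1458:ℝ)*p^3 + (3600:ℝ)*p^4 + (-4560:ℝ)*p^5 + (2880:ℝ)*p^6 + (-720:ℝ)*p^7)/p^6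
  | 2 => ((713/42:ℝ)*p + (-681/2:ℝ)*p^2 + (5912/3:ℝ)*p^3 + (-5050:ℝ)*p^4 + (6492:ℝ)*p^5 + (-4116:ℝ)*p^6 + (7188/7:ℝ)*p^7)/p^6
  | 3 => ((687/10:ℝ)*p^2 + (-5347/10:ℝ)*p^3 + (4543/3:ℝ)*p^4 + (-6064/3:ℝ)*p^5 + (1295:ℝ)*p^6 + (-322:ℝ)*p^7)/p^6
  | 4 => ((797/60:ℝ)*p^3 + (-211/4:ℝ)*p^4 + (473/6:ℝ)*p^5 + (-105/2:ℝ)*p^6 + (197/15:ℝ)*p^7)/p^6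
  | _ => 0

def c8coef (p : ℝ) : ℕ → ℝ
  | 1 => ((1:ℝ)*p + (-127:ℝ)*p^2 + (1932:ℝ)*p^3 + (-10206:ℝ)*p^4 + (25200:ℝ)*p^5 + (-31920:ℝ)*p^6 + (20160:ℝ)*p^7 + (-5040:ℝ)*p^8)
  | 2 => ((119:ℝ)*p^2 + (-2394:ℝ)*p^3 + (13895:ℝ)*p^4 + (-35700:ℝ)*p^5 + (46004:ℝ)*p^6 + (-29232:ℝ)*p^7 + (7308:ℝ)*p^8)
  | 3 => ((490:ℝ)*p^3 + (-3850:ℝ)*p^4 + (10990:ℝ)*p^5 + (-14770:ℝ)*p^6 + (9520:ℝ)*p^7 + (-2380:ℝ)*p^8)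
  | 4 => ((105:ℝ)*p^4 + (-420:ℝ)*p^5 + (630:ℝ)*p^6 + (-420:ℝ)*p^7 + (105:ℝ)*p^8)
  | _ => 0
lemma pow8_eq (nn p y : ℝ) :
    (y - nn*p)^8 = ∑ r ∈ Finset.range 9, acoef nn p r * ∏ i ∈ Finset.range r, (y - i) := by
  simp only [Finset.sum_range_succ, Finset.prod_range_succ, acoef, Finset.sum_range_zero,
    Finset.prod_range_zero]
  push_cast
  ring

lemma P7_eq (nn p y : ℝ) (hn : nn ≠ 0) (hp : p ≠ 0) :
    (y/nn) * Real.log p + (y/nn) * P7 ((y/nn - p)/p)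
      = ∑ r ∈ Finset.range 9,
          ((if r = 1 then Real.log p / nn else 0) + dcoef nn p r) * ∏ i ∈ Finset.range r, (y - i) := by
  simp only [Finset.sum_range_succ, Finset.prod_range_succ, dcoef, Finset.sum_range_zero,
    Finset.prod_range_zero, P7]
  push_cast
  field_simp
  ring

lemma eval_d (nn p : ℝ) (hn : nn ≠ 0) (hp : p ≠ 0) :
    ∑ r ∈ Finset.range 9,
        ((if r = 1 then Real.log p / nn else 0) + dcoef nn p r) * ((∏ i ∈ Finset.range r, (nn - i)) * p^r)
      = p * Real.log p + ((1-p)/(2*nn) - (p - 1/p)/(12*nn^2) - (1/p - 1/p^2)/(12*nn^3))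
        + (gcoef p 1 * nn + gcoef p 2 * nn^2 + gcoef p 3 * nn^3 + gcoef p 4 * nn^4)/nn^8 := by
  simp only [Finset.sum_range_succ, Finset.prod_range_succ, dcoef, gcoef, Finset.sum_range_zero,
    Finset.prod_range_zero]
  push_cast
  field_simp
  ring

lemma eval_a (nn p : ℝ) :
    ∑ r ∈ Finset.range 9, acoef nn p r * ((∏ i ∈ Finset.range r, (nn - i)) * p^r)
      = c8coef p 1 * nn + c8coef p 2 * nn^2 + c8coef p 3 * nn^3 + c8coef p 4 * nn^4 := by
  simp only [Finset.sum_range_succ, Finset.prod_range_succ, acoef, c8coef, Finset.sum_range_zero,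
    Finset.prod_range_zero]
  push_cast
  ring


noncomputable def Ebin (n : ℕ) (p : ℝ) (h : ℕ → ℝ) : ℝ :=
  ∑ k ∈ Finset.range (n+1), (n.choose k : ℝ) * p^k * (1-p)^(n-k) * h k

lemma prod_range_cast_descFactorial (k r : ℕ) :
    ∏ i ∈ Finset.range r, ((k:ℝ) - i) = (k.descFactorial r : ℝ) := by
  rcases le_or_gt r k with h | h
  · rw [Nat.descFactorial_eq_prod_range, Nat.cast_prod]
    refine Finset.prod_congr rfl fun i hi => ?_
    rw [Nat.cast_sub (le_of_lt (lt_of_lt_of_le (Finset.mem_range.mp hi) h))]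
  · rw [Nat.descFactorial_eq_zero_iff_lt.2 h, Nat.cast_zero]
    exact Finset.prod_eq_zero (Finset.mem_range.mpr h) (by simp)

lemma Ebin_ff (n r : ℕ) (p : ℝ) :
    Ebin n p (fun k => ∏ i ∈ Finset.range r, ((k:ℝ) - i))
      = (∏ i ∈ Finset.range r, ((n:ℝ) - i)) * p^r := by
  rcases le_or_gt r n with hr | hr
  · have hsplit : Ebin n p (fun k => ∏ i ∈ Finset.range r, ((k:ℝ) - i))
        = ∑ k ∈ Finset.Ico 0 r, (n.choose k : ℝ) * p^k * (1-p)^(n-k) * (k.descFactorial r : ℝ)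
          + ∑ k ∈ Finset.Ico r (n+1), (n.choose k : ℝ) * p^k * (1-p)^(n-k) * (k.descFactorial r : ℝ) := by
      rw [Finset.sum_Ico_consecutive _ (Nat.zero_le r) (by omega), ← Finset.range_eq_Ico]
      unfold Ebin
      exact Finset.sum_congr rfl fun k _ => by beta_reduce; rw [prod_range_cast_descFactorial]
    have hz : ∑ k ∈ Finset.Ico 0 r, (n.choose k : ℝ) * p^k * (1-p)^(n-k) * (k.descFactorial r : ℝ) = 0 := by
      refine Finset.sum_eq_zero fun k hk => ?_
      have : k < r := (Finset.mem_Ico.mp hk).2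
      rw [Nat.descFactorial_eq_zero_iff_lt.2 this, Nat.cast_zero, mul_zero]
    have hmain : ∑ k ∈ Finset.Ico r (n+1), (n.choose k : ℝ) * p^k * (1-p)^(n-k) * (k.descFactorial r : ℝ)
        = (n.descFactorial r : ℝ) * p^r := by
      rw [Finset.sum_Ico_eq_sum_range]
      have hcongr : ∀ j ∈ Finset.range (n+1-r),
          (n.choose (r+j) : ℝ) * p^(r+j) * (1-p)^(n-(r+j)) * ((r+j).descFactorial r : ℝ)
          = ((n.descFactorial r : ℝ) * p^r) * (p^j * (1-p)^((n-r)-j) * ((n-r).choose j : ℝ)) := by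
        intro j hj
        have hj' : r + j ≤ n := by have := Finset.mem_range.mp hj; omega
        have h1 : n.choose (r+j) * (r+j).descFactorial r
            = n.descFactorial r * (n-r).choose j := by
          rw [Nat.descFactorial_eq_factorial_mul_choose (r+j) r,
            Nat.descFactorial_eq_factorial_mul_choose n r]
          calc n.choose (r+j) * (Nat.factorial r * (r+j).choose r)
              = Nat.factorial r * (n.choose (r+j) * (r+j).choose r) := by ring
            _ = Nat.factorial r * (n.choose r * (n-r).choose (r+j-r)) := by
                rw [Nat.choose_mul (Nat.le_add_right r j)]
            _ = Nat.factorial r * n.choose r * (n-r).choose j := by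
                rw [Nat.add_sub_cancel_left]; ring
        have h3 : n - (r+j) = (n-r) - j := by omega
        calc (n.choose (r+j) : ℝ) * p^(r+j) * (1-p)^(n-(r+j)) * ((r+j).descFactorial r : ℝ)
            = ((n.choose (r+j) * (r+j).descFactorial r : ℕ) : ℝ) * (p^r * p^j) * (1-p)^((n-r)-j) := by
              rw [h3, pow_add]; push_cast; ring
          _ = _ := by rw [h1]; push_cast; ring
      rw [Finset.sum_congr rfl hcongr, ← Finset.mul_sum]
      have hnr : n + 1 - r = (n - r) + 1 := by omega
      have hbin : ∑ j ∈ Finset.range ((n-r)+1), p^j * (1-p)^((n-r)-j) * ((n-r).choose j : ℝ)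
          = (p + (1-p))^(n-r) := (add_pow p (1-p) (n-r)).symm
      rw [hnr, hbin]
      norm_num
    rw [hsplit, hz, hmain, zero_add, prod_range_cast_descFactorial]
  · have hzero : (∏ i ∈ Finset.range r, ((n:ℝ) - i)) = 0 :=
      Finset.prod_eq_zero (Finset.mem_range.mpr hr) (by simp)
    rw [hzero, zero_mul]
    unfold Ebin
    refine Finset.sum_eq_zero fun k hk => ?_
    have hz : (∏ i ∈ Finset.range r, ((k:ℝ) - i)) = 0 :=
      Finset.prod_eq_zero (Finset.mem_range.mpr (lt_of_lt_of_le (Finset.mem_range.mp hk) hr)) (by simp)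
    simp only [hz, mul_zero]


lemma Ebin_congr (n : ℕ) (p : ℝ) (h h' : ℕ → ℝ) (he : ∀ k, k ≤ n → h k = h' k) :
    Ebin n p h = Ebin n p h' := by
  unfold Ebin
  exact Finset.sum_congr rfl fun k hk => by
    rw [he k (Nat.lt_succ_iff.mp (Finset.mem_range.mp hk))]

lemma Ebin_sum_comm (n m : ℕ) (p : ℝ) (c : ℕ → ℝ) :
    Ebin n p (fun k => ∑ r ∈ Finset.range m, c r * ∏ i ∈ Finset.range r, ((k:ℝ) - i))
      = ∑ r ∈ Finset.range m, c r * ((∏ i ∈ Finset.range r, ((n:ℝ) - i)) * p^r) := by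
  unfold Ebin
  simp only [Finset.mul_sum]
  rw [Finset.sum_comm]
  refine Finset.sum_congr rfl fun r _ => ?_
  have h := Ebin_ff n r p
  simp only [Ebin] at h
  rw [← h, Finset.mul_sum]
  exact Finset.sum_congr rfl fun k _ => by ring

lemma abs_Ebin_le (n : ℕ) (p : ℝ) (hp0 : 0 ≤ p) (hp1 : p ≤ 1) (h h' : ℕ → ℝ)
    (hb : ∀ k, k ≤ n → |h k| ≤ h' k) :
    |Ebin n p h| ≤ Ebin n p h' := by
  unfold Ebin
  refine (Finset.abs_sum_le_sum_abs _ _).trans (Finset.sum_le_sum fun k hk => ?_)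
  have hk' : k ≤ n := Nat.lt_succ_iff.mp (Finset.mem_range.mp hk)
  have hq : (0:ℝ) ≤ 1 - p := by linarith
  have hw : (0:ℝ) ≤ (n.choose k : ℝ) * p^k * (1-p)^(n-k) := by positivity
  rw [abs_mul]
  rw [abs_of_nonneg hw]
  exact mul_le_mul_of_nonneg_left (hb k hk') hw


lemma abs_mul_log_le_one {x : ℝ} (hx0 : 0 ≤ x) (hx1 : x ≤ 1) : |x * Real.log x| ≤ 1 := by
  rcases eq_or_lt_of_le hx0 with h | h
  · simp [← h]
  · have hlog : Real.log x ≤ 0 := Real.log_nonpos (le_of_lt h) hx1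
    have hinv : Real.log x⁻¹ ≤ x⁻¹ - 1 := Real.log_le_sub_one_of_pos (by positivity)
    have hloginv : Real.log x⁻¹ = -Real.log x := Real.log_inv x
    have hxlog : x * Real.log x ≤ 0 := mul_nonpos_of_nonneg_of_nonpos hx0 hlog
    rw [abs_of_nonpos hxlog]
    have h2 : -(x * Real.log x) = x * Real.log x⁻¹ := by rw [hloginv]; ring
    rw [h2]
    calc x * Real.log x⁻¹ ≤ x * (x⁻¹ - 1) :=
          mul_le_mul_of_nonneg_left (by linarith) hx0
      _ = 1 - x := by field_simp
      _ ≤ 1 := by linarith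

lemma log_taylor_bound {u : ℝ} (hu : |u| ≤ 1/2) : |Real.log (1+u) - P7 u| ≤ 2 * u^8 := by
  have h1 : |(-u)| < 1 := by rw [abs_neg]; linarith [abs_nonneg u]
  have key := Real.abs_log_sub_add_sum_range_le h1 7
  have hsum : (∑ i ∈ Finset.range 7, (-u) ^ (i + 1) / (i + 1)) = -P7 u := by
    simp only [Finset.sum_range_succ, Finset.sum_range_zero, P7]
    push_cast
    ring
  rw [hsum, abs_neg] at key
  have h2 : (1:ℝ) - (-u) = 1 + u := by ring
  rw [h2] at key
  have h3 : |-P7 u + Real.log (1+u)| = |Real.log (1+u) - P7 u| := by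
    rw [show -P7 u + Real.log (1+u) = Real.log (1+u) - P7 u by ring]
  rw [h3] at key
  have habs : |u|^8 = u^8 := by rw [← abs_pow, abs_of_nonneg (by positivity)]
  have hden : (1:ℝ)/2 ≤ 1 - |u| := by linarith
  calc |Real.log (1+u) - P7 u| ≤ |u|^8 / (1 - |u|) := key
    _ ≤ |u|^8 / (1/2) := div_le_div_of_nonneg_left (by positivity) (by norm_num) hden
    _ = 2 * u^8 := by rw [habs]; ring

lemma ptwise {p : ℝ} (hp : 0 < p) (hp1 : p ≤ 1) {x : ℝ} (hx0 : 0 ≤ x) (hx1 : x ≤ 1) :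
    |x * Real.log x - (x * Real.log p + x * P7 ((x-p)/p))|
      ≤ (2 + 256*(1 + |Real.log p| + 7/p^7)) * ((x-p)/p)^8 := by
  set u := (x-p)/p with hu_def
  have hpu : p * u = x - p := by rw [hu_def]; field_simp
  have hx : x = p * (1+u) := by rw [mul_add, hpu]; ring
  have hu8 : (0:ℝ) ≤ u^8 := by positivity
  have hK0 : (0:ℝ) ≤ 1 + |Real.log p| + 7/p^7 := by positivity
  rcases le_or_gt |u| (1/2) with hu | hu
  · have hmu : -(1/2) ≤ u := neg_le_of_abs_le hu
    have hxpos : 0 < x := by nlinarith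
    have h1u : (0:ℝ) < 1 + u := by nlinarith
    have hlogx : Real.log x = Real.log p + Real.log (1+u) := by
      rw [hx, Real.log_mul hp.ne' h1u.ne']
    have heq : x * Real.log x - (x * Real.log p + x * P7 u)
        = x * (Real.log (1+u) - P7 u) := by rw [hlogx]; ring
    rw [heq, abs_mul]
    have hxabs : |x| ≤ 1 := by rw [abs_of_nonneg hx0]; exact hx1
    calc |x| * |Real.log (1+u) - P7 u| ≤ 1 * (2 * u^8) :=
          mul_le_mul hxabs (log_taylor_bound hu) (abs_nonneg _) zero_le_one
      _ ≤ (2 + 256*(1 + |Real.log p| + 7/p^7)) * u^8 := by nlinarith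
  · have habs8 : |u|^8 = u^8 := by rw [← abs_pow, abs_of_nonneg (by positivity)]
    have h256 : (1:ℝ) ≤ 256 * u^8 := by
      have h2u : (1:ℝ) ≤ 2 * |u| := by linarith
      have hh := pow_le_pow_left₀ (by norm_num : (0:ℝ) ≤ 1) h2u 8
      rw [one_pow, mul_pow, habs8] at hh
      norm_num at hh
      linarith
    have hup : |u| ≤ 1/p := by
      rw [hu_def, abs_div, abs_of_pos hp, div_le_div_iff₀ hp hp, one_mul]
      have : |x - p| ≤ 1 := by rw [abs_le]; constructor <;> linarith
      nlinarith [abs_nonneg (x-p)]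
    have hq1 : (1:ℝ) ≤ 1/p := by rw [le_div_iff₀ hp]; linarith
    have hpow : ∀ i : ℕ, i ≤ 7 → |u|^i ≤ (1/p)^7 := by
      intro i hi7
      calc |u|^i ≤ (1/p)^i := pow_le_pow_left₀ (abs_nonneg u) hup i
        _ ≤ (1/p)^7 := pow_le_pow_right₀ hq1 hi7
    have c1 : -((1/p)^7) ≤ u ∧ u ≤ (1/p)^7 :=
      abs_le.mp (by calc |u| = |u|^1 := (pow_one _).symm
                     _ ≤ (1/p)^7 := hpow 1 (by norm_num))
    have c2 := abs_le.mp (show |u^2| ≤ (1/p)^7 by rw [abs_pow]; exact hpow 2 (by norm_num))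
    have c3 := abs_le.mp (show |u^3| ≤ (1/p)^7 by rw [abs_pow]; exact hpow 3 (by norm_num))
    have c4 := abs_le.mp (show |u^4| ≤ (1/p)^7 by rw [abs_pow]; exact hpow 4 (by norm_num))
    have c5 := abs_le.mp (show |u^5| ≤ (1/p)^7 by rw [abs_pow]; exact hpow 5 (by norm_num))
    have c6 := abs_le.mp (show |u^6| ≤ (1/p)^7 by rw [abs_pow]; exact hpow 6 (by norm_num))
    have c7 := abs_le.mp (show |u^7| ≤ (1/p)^7 by rw [abs_pow]; exact hpow 7 (by norm_num))
    have hP7 : |P7 u| ≤ 7 * (1/p)^7 := by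
      have hq7 : (0:ℝ) ≤ (1/p)^7 := by positivity
      unfold P7
      rw [abs_le]
      constructor <;>
        linarith [c1.1, c1.2, c2.1, c2.2, c3.1, c3.2, c4.1, c4.2, c5.1, c5.2, c6.1, c6.2,
          c7.1, c7.2]
    have hP7' : |P7 u| ≤ 7/p^7 := by
      calc |P7 u| ≤ 7 * (1/p)^7 := hP7
        _ = 7/p^7 := by rw [div_pow, one_pow]; ring
    clear hP7
    have hxabs : |x| ≤ 1 := by rw [abs_of_nonneg hx0]; exact hx1
    have htri : |x * Real.log x - (x * Real.log p + x * P7 u)|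
        ≤ |x * Real.log x| + |x * Real.log p| + |x * P7 u| := by
      calc |x * Real.log x - (x * Real.log p + x * P7 u)|
          = |x * Real.log x - x * Real.log p - x * P7 u| := by ring_nf
        _ ≤ |x * Real.log x - x * Real.log p| + |x * P7 u| := abs_sub _ _
        _ ≤ |x * Real.log x| + |x * Real.log p| + |x * P7 u| := by
            linarith [abs_sub (x * Real.log x) (x * Real.log p)]
    have hb1 : |x * Real.log x| ≤ 1 := abs_mul_log_le_one hx0 hx1
    have hb2 : |x * Real.log p| ≤ |Real.log p| := by
      rw [abs_mul]
      exact mul_le_of_le_one_left (abs_nonneg _) hxabs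
    have hb3 : |x * P7 u| ≤ 7/p^7 := by
      rw [abs_mul]
      exact (mul_le_of_le_one_left (abs_nonneg _) hxabs).trans hP7'
    calc |x * Real.log x - (x * Real.log p + x * P7 u)|
        ≤ (1 + |Real.log p| + 7/p^7) * 1 := by linarith
      _ ≤ (1 + |Real.log p| + 7/p^7) * (256 * u^8) := mul_le_mul_of_nonneg_left h256 hK0
      _ ≤ (2 + 256*(1 + |Real.log p| + 7/p^7)) * u^8 := by nlinarith

lemma poly_bound {ν γ1 γ2 γ3 γ4 : ℝ} (hn : 1 ≤ ν) :
    |γ1*ν + γ2*ν^2 + γ3*ν^3 + γ4*ν^4| ≤ (|γ1| + |γ2| + |γ3| + |γ4|) * ν^4 := by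
  have h0 : (0:ℝ) < ν := lt_of_lt_of_le one_pos hn
  have e1 : ν ≤ ν^4 := by calc ν = ν^1 := (pow_one _).symm
                            _ ≤ ν^4 := pow_le_pow_right₀ hn (by norm_num)
  have e2 : ν^2 ≤ ν^4 := pow_le_pow_right₀ hn (by norm_num)
  have e3 : ν^3 ≤ ν^4 := pow_le_pow_right₀ hn (by norm_num)
  have m1 := mul_le_mul_of_nonneg_left e1 (abs_nonneg γ1)
  have m2 := mul_le_mul_of_nonneg_left e2 (abs_nonneg γ2)
  have m3 := mul_le_mul_of_nonneg_left e3 (abs_nonneg γ3)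
  calc |γ1*ν + γ2*ν^2 + γ3*ν^3 + γ4*ν^4|
      ≤ |γ1*ν| + |γ2*ν^2| + |γ3*ν^3| + |γ4*ν^4| := by
        calc |γ1*ν + γ2*ν^2 + γ3*ν^3 + γ4*ν^4|
            ≤ |γ1*ν + γ2*ν^2 + γ3*ν^3| + |γ4*ν^4| := abs_add_le _ _
          _ ≤ |γ1*ν + γ2*ν^2| + |γ3*ν^3| + |γ4*ν^4| := by linarith [abs_add_le (γ1*ν + γ2*ν^2) (γ3*ν^3)]
          _ ≤ |γ1*ν| + |γ2*ν^2| + |γ3*ν^3| + |γ4*ν^4| := by linarith [abs_add_le (γ1*ν) (γ2*ν^2)]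
    _ = |γ1| *ν + |γ2| *ν^2 + |γ3| *ν^3 + |γ4| *ν^4 := by
        rw [abs_mul, abs_mul, abs_mul, abs_mul, abs_of_pos h0, abs_of_pos (by positivity : (0:ℝ) < ν^2),
          abs_of_pos (by positivity : (0:ℝ) < ν^3), abs_of_pos (by positivity : (0:ℝ) < ν^4)]
    _ ≤ (|γ1| + |γ2| + |γ3| + |γ4|) * ν^4 := by nlinarith [m1, m2, m3, abs_nonneg γ1, abs_nonneg γ2, abs_nonneg γ3, abs_nonneg γ4]


lemma marginal (M n : ℕ) (p : Fin M → ℝ) (j : Fin M) (h : ℕ → ℝ) :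
    ∑ f ∈ Finset.Nat.antidiagonalTuple M n, multProb p f * h (f j)
      = ∑ k ∈ Finset.range (n+1),
          (n.choose k : ℝ) * (p j)^k * (∑ i ∈ Finset.univ.erase j, p i)^(n-k) * h k := by
  classical
  rw [← Finset.piAntidiag_univ_fin_eq_antidiagonalTuple]
  have hj : j ∉ Finset.univ.erase j := Finset.notMem_erase j _
  have huniv : (Finset.univ : Finset (Fin M)) = Finset.cons j (Finset.univ.erase j) hj := by
    rw [Finset.cons_eq_insert, Finset.insert_erase (Finset.mem_univ j)]
  rw [show (Finset.univ : Finset (Fin M)).piAntidiag n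
      = (Finset.cons j (Finset.univ.erase j) hj).piAntidiag n from by rw [← huniv],
    Finset.piAntidiag_cons, Finset.sum_disjiUnion]
  have inner : ∀ q : ℕ × ℕ, q ∈ Finset.HasAntidiagonal.antidiagonal n →
      ∑ f ∈ Finset.map (addRightEmbedding fun t => if t = j then q.1 else 0)
          ((Finset.univ.erase j).piAntidiag q.2), multProb p f * h (f j)
      = (n.choose q.1 : ℝ) * (p j)^q.1 * (∑ i ∈ Finset.univ.erase j, p i)^q.2 * h q.1 := by
    rintro ⟨a, b⟩ hq
    have hab : a + b = n := Finset.HasAntidiagonal.mem_antidiagonal.mp hq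
    rw [Finset.sum_map]
    have term : ∀ g ∈ (Finset.univ.erase j).piAntidiag b,
        multProb p ((addRightEmbedding fun t => if t = j then a else 0) g) * h (((addRightEmbedding fun t => if t = j then a else 0) g) j)
        = ((n.choose a : ℝ) * (p j)^a * h a) *
            ((Nat.multinomial (Finset.univ.erase j) g : ℝ) * ∏ i ∈ Finset.univ.erase j, p i ^ g i) := by
      intro g hg
      obtain ⟨hgsum, hgsupp⟩ := Finset.mem_piAntidiag.mp hg
      have hgj : g j = 0 := by
        by_contra hne
        exact hj (hgsupp j hne)
      have hfg : ∀ t, ((addRightEmbedding fun t => if t = j then a else 0) g) t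
          = g t + if t = j then a else 0 := fun t => rfl
      set f : Fin M → ℕ := (addRightEmbedding fun t => if t = j then a else 0) g with hf
      have hfj : f j = a := by rw [hfg j, hgj, if_pos rfl, zero_add]
      have hfe : ∀ t ∈ Finset.univ.erase j, f t = g t := by
        intro t ht
        rw [hfg t, if_neg (Finset.ne_of_mem_erase ht), add_zero]
      have hsum_fe : ∑ i ∈ Finset.univ.erase j, f i = b := by
        rw [Finset.sum_congr rfl hfe, hgsum]
      have hmult : Nat.multinomial Finset.univ f
          = n.choose a * Nat.multinomial (Finset.univ.erase j) g := by
        rw [huniv, Nat.multinomial_cons, Finset.erase_cons, hfj, hsum_fe, hab,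
          Nat.multinomial_congr hfe]
      have hprod : ∏ i, p i ^ f i = p j ^ a * ∏ i ∈ Finset.univ.erase j, p i ^ g i := by
        rw [huniv, Finset.prod_cons, Finset.erase_cons, hfj]
        congr 1
        exact Finset.prod_congr rfl fun t ht => by rw [hfe t ht]
      unfold multProb
      rw [hmult, hprod, hfj]
      push_cast
      ring
    rw [Finset.sum_congr rfl term, ← Finset.mul_sum]
    rw [← Finset.sum_pow_eq_sum_piAntidiag (Finset.univ.erase j) p b]
    ring
  rw [Finset.sum_congr rfl inner]
  rw [Finset.Nat.sum_antidiagonal_eq_sum_range_succ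
    (fun a b => (n.choose a : ℝ) * (p j)^a * (∑ i ∈ Finset.univ.erase j, p i)^b * h a)]


lemma Ebin_sub (n : ℕ) (p : ℝ) (h h' : ℕ → ℝ) :
    Ebin n p (fun k => h k - h' k) = Ebin n p h - Ebin n p h' := by
  unfold Ebin
  rw [← Finset.sum_sub_distrib]
  exact Finset.sum_congr rfl fun k _ => by ring

lemma Ebin_const_mul (n : ℕ) (p c : ℝ) (h : ℕ → ℝ) :
    Ebin n p (fun k => c * h k) = c * Ebin n p h := by
  unfold Ebin
  rw [Finset.mul_sum]
  exact Finset.sum_congr rfl fun k _ => by ring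

lemma cell (p : ℝ) (hp : 0 < p) (hp1 : p ≤ 1) :
    ∃ C : ℝ, ∀ n : ℕ, 1 ≤ n →
      |Ebin n p (fun k => ((k:ℝ)/(n:ℝ)) * Real.log ((k:ℝ)/(n:ℝ)))
        - (p * Real.log p + ((1-p)/(2*(n:ℝ)) - (p - 1/p)/(12*(n:ℝ)^2) - (1/p - 1/p^2)/(12*(n:ℝ)^3)))|
      ≤ C / (n:ℝ)^4 := by
  set Kp := 2 + 256*(1 + |Real.log p| + 7/p^7) with hKp
  have hKp0 : 0 ≤ Kp := by rw [hKp]; positivity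
  set Γ := |c8coef p 1| + |c8coef p 2| + |c8coef p 3| + |c8coef p 4| with hΓ
  have hΓ0 : 0 ≤ Γ := by rw [hΓ]; positivity
  set G := |gcoef p 1| + |gcoef p 2| + |gcoef p 3| + |gcoef p 4| with hG
  refine ⟨Kp * Γ / p^8 + G, fun n hn => ?_⟩
  have hn1 : (1:ℝ) ≤ (n:ℝ) := by exact_mod_cast hn
  have hn0 : (0:ℝ) < (n:ℝ) := by linarith
  have hnne : (n:ℝ) ≠ 0 := ne_of_gt hn0
  set nn := (n:ℝ) with hnn
  set A : ℕ → ℝ := fun k => ((k:ℝ)/nn) * Real.log p + ((k:ℝ)/nn) * P7 (((k:ℝ)/nn - p)/p) with hA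
  set c8val := c8coef p 1 * nn + c8coef p 2 * nn^2 + c8coef p 3 * nn^3 + c8coef p 4 * nn^4 with hc8val
  set gval := gcoef p 1 * nn + gcoef p 2 * nn^2 + gcoef p 3 * nn^3 + gcoef p 4 * nn^4 with hgval
  have hEA : Ebin n p A = p * Real.log p
      + ((1-p)/(2*nn) - (p - 1/p)/(12*nn^2) - (1/p - 1/p^2)/(12*nn^3)) + gval/nn^8 := by
    rw [Ebin_congr n p A
      (fun k => ∑ r ∈ Finset.range 9,
        ((if r = 1 then Real.log p / nn else 0) + dcoef nn p r) * ∏ i ∈ Finset.range r, ((k:ℝ) - i))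
      (fun k _ => P7_eq nn p (k:ℝ) hnne hp.ne')]
    rw [Ebin_sum_comm]
    exact eval_d nn p hnne hp.ne'
  have hE8 : Ebin n p (fun k => (((k:ℝ)/nn - p)/p)^8) = (1/(nn^8*p^8)) * c8val := by
    have hpt : ∀ k:ℕ, k ≤ n → (((k:ℝ)/nn - p)/p)^8
        = (1/(nn^8*p^8)) * ∑ r ∈ Finset.range 9, acoef nn p r * ∏ i ∈ Finset.range r, ((k:ℝ) - i) := by
      intro k _
      have h1 : (k:ℝ)/nn - p = ((k:ℝ) - nn*p)/nn := by field_simp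
      rw [h1, div_div, div_pow, mul_pow, ← pow8_eq nn p (k:ℝ), one_div_mul_eq_div]
    rw [Ebin_congr n p _ _ hpt, Ebin_const_mul, Ebin_sum_comm, eval_a]
  have herr : |Ebin n p (fun k => ((k:ℝ)/nn) * Real.log ((k:ℝ)/nn)) - Ebin n p A|
      ≤ Kp * ((1/(nn^8*p^8)) * c8val) := by
    rw [← Ebin_sub]
    have hb : ∀ k, k ≤ n → |((k:ℝ)/nn) * Real.log ((k:ℝ)/nn) - A k|
        ≤ Kp * ((((k:ℝ)/nn - p)/p)^8) := by
      intro k hk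
      have hx0 : (0:ℝ) ≤ (k:ℝ)/nn := by positivity
      have hx1 : (k:ℝ)/nn ≤ 1 := by
        rw [div_le_one hn0, hnn]; exact_mod_cast hk
      exact ptwise hp hp1 hx0 hx1
    calc |Ebin n p (fun k => ((k:ℝ)/nn) * Real.log ((k:ℝ)/nn) - A k)|
        ≤ Ebin n p (fun k => Kp * ((((k:ℝ)/nn - p)/p)^8)) := abs_Ebin_le n p hp.le hp1 _ _ hb
      _ = Kp * ((1/(nn^8*p^8)) * c8val) := by rw [Ebin_const_mul, hE8]
  have hc8b : c8val ≤ Γ * nn^4 := le_trans (le_abs_self _) (poly_bound hn1)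
  have hgb : |gval| ≤ G * nn^4 := poly_bound hn1
  have hn8 : nn^8 = nn^4 * nn^4 := by ring
  have step1 : Kp * ((1/(nn^8*p^8)) * c8val) ≤ (Kp * Γ / p^8) / nn^4 := by
    have lhs_eq : Kp * ((1/(nn^8*p^8)) * c8val) = (Kp * c8val)/(nn^8*p^8) := by ring
    have rhs_eq : (Kp * Γ / p^8) / nn^4 = (Kp * Γ)/(p^8*nn^4) := by ring
    rw [lhs_eq, rhs_eq, div_le_div_iff₀ (by positivity) (by positivity)]
    have h1 : Kp * c8val ≤ Kp * (Γ * nn^4) := mul_le_mul_of_nonneg_left hc8b hKp0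
    exact (mul_le_mul_of_nonneg_right h1 (show (0:ℝ) ≤ p^8*nn^4 by positivity)).trans_eq (by ring)
  have step2 : |gval/nn^8| ≤ G / nn^4 := by
    rw [abs_div, abs_of_pos (show (0:ℝ) < nn^8 by positivity),
      div_le_div_iff₀ (by positivity) (by positivity)]
    exact (mul_le_mul_of_nonneg_right hgb (show (0:ℝ) ≤ nn^4 by positivity)).trans_eq (by ring)
  calc |Ebin n p (fun k => ((k:ℝ)/nn) * Real.log ((k:ℝ)/nn))
        - (p * Real.log p + ((1-p)/(2*nn) - (p - 1/p)/(12*nn^2) - (1/p - 1/p^2)/(12*nn^3)))|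
      ≤ |Ebin n p (fun k => ((k:ℝ)/nn) * Real.log ((k:ℝ)/nn)) - Ebin n p A|
        + |Ebin n p A - (p * Real.log p + ((1-p)/(2*nn) - (p - 1/p)/(12*nn^2) - (1/p - 1/p^2)/(12*nn^3)))| :=
        abs_sub_le _ _ _
    _ ≤ Kp * ((1/(nn^8*p^8)) * c8val) + |gval/nn^8| := by
        refine add_le_add herr (le_of_eq ?_)
        rw [hEA]
        congr 1
        ring
    _ ≤ (Kp * Γ / p^8) / nn^4 + G / nn^4 := add_le_add step1 step2
    _ = (Kp * Γ / p^8 + G) / nn^4 := (add_div _ _ _).symm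


/-- Bias expansion of the plug-in entropy estimator up to order `n⁻³`
with `O(n⁻⁴)` remainder. -/
theorem expEntropy_expansion (M : ℕ) (p : Fin M → ℝ)
    (hp : ∀ j, 0 < p j) (hsum : ∑ j, p j = 1) :
    ∃ C : ℝ, ∀ n : ℕ, 1 ≤ n →
      |expEntropy M n p -
          (shannonH p - ((M : ℝ) - 1) / (2 * (n : ℝ)) +
            (1 / (12 * (n : ℝ) ^ 2)) * (1 - ∑ j, 1 / p j) +
            (1 / (12 * (n : ℝ) ^ 3)) * ∑ j, (1 / p j - 1 / (p j) ^ 2))| ≤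
        C / (n : ℝ) ^ 4 := by
  classical
  have hp1 : ∀ j, p j ≤ 1 := fun j => by
    rw [← hsum]
    exact Finset.single_le_sum (fun i _ => (hp i).le) (Finset.mem_univ j)
  choose Cf hCf using fun j => cell (p j) (hp j) (hp1 j)
  refine ⟨∑ j, Cf j, fun n hn => ?_⟩
  have herase : ∀ j, ∑ i ∈ Finset.univ.erase j, p i = 1 - p j := by
    intro j
    rw [eq_sub_iff_add_eq, ← hsum]
    exact Finset.sum_erase_add _ _ (Finset.mem_univ j)
  have hswap : expEntropy M n p
      = -∑ j, Ebin n (p j) (fun k => ((k:ℝ)/(n:ℝ)) * Real.log ((k:ℝ)/(n:ℝ))) := by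
    unfold expEntropy plugInEntropy
    calc ∑ f ∈ Finset.Nat.antidiagonalTuple M n,
          multProb p f * -∑ j, ((f j : ℝ)/(n:ℝ)) * Real.log ((f j : ℝ)/(n:ℝ))
        = -∑ f ∈ Finset.Nat.antidiagonalTuple M n,
            ∑ j, multProb p f * (((f j : ℝ)/(n:ℝ)) * Real.log ((f j : ℝ)/(n:ℝ))) := by
          rw [← Finset.sum_neg_distrib]
          exact Finset.sum_congr rfl fun f _ => by rw [mul_neg, Finset.mul_sum]
      _ = -∑ j, ∑ f ∈ Finset.Nat.antidiagonalTuple M n,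
            multProb p f * (((f j : ℝ)/(n:ℝ)) * Real.log ((f j : ℝ)/(n:ℝ))) := by
          rw [Finset.sum_comm]
      _ = -∑ j, Ebin n (p j) (fun k => ((k:ℝ)/(n:ℝ)) * Real.log ((k:ℝ)/(n:ℝ))) := by
          congr 1
          refine Finset.sum_congr rfl fun j _ => ?_
          rw [marginal M n p j (fun k => ((k:ℝ)/(n:ℝ)) * Real.log ((k:ℝ)/(n:ℝ))), herase j]
          rfl
  have hM : ∑ _j : Fin M, (1:ℝ) = (M:ℝ) := by simp
  have htarget : shannonH p - ((M : ℝ) - 1) / (2 * (n : ℝ)) +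
        (1 / (12 * (n : ℝ) ^ 2)) * (1 - ∑ j, 1 / p j) +
        (1 / (12 * (n : ℝ) ^ 3)) * ∑ j, (1 / p j - 1 / (p j) ^ 2)
      = -∑ j, (p j * Real.log (p j)
          + ((1-p j)/(2*(n:ℝ)) - (p j - 1/p j)/(12*(n:ℝ)^2) - (1/p j - 1/(p j)^2)/(12*(n:ℝ)^3))) := by
    unfold shannonH
    simp only [Finset.sum_add_distrib, Finset.sum_sub_distrib, sub_div, add_div,
      ← Finset.sum_div]
    rw [hsum, hM]
    ring
  rw [hswap, htarget]
  have key : -∑ j, Ebin n (p j) (fun k => ((k:ℝ)/(n:ℝ)) * Real.log ((k:ℝ)/(n:ℝ)))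
      - -∑ j, (p j * Real.log (p j)
          + ((1-p j)/(2*(n:ℝ)) - (p j - 1/p j)/(12*(n:ℝ)^2) - (1/p j - 1/(p j)^2)/(12*(n:ℝ)^3)))
      = -∑ j, (Ebin n (p j) (fun k => ((k:ℝ)/(n:ℝ)) * Real.log ((k:ℝ)/(n:ℝ)))
          - (p j * Real.log (p j)
          + ((1-p j)/(2*(n:ℝ)) - (p j - 1/p j)/(12*(n:ℝ)^2) - (1/p j - 1/(p j)^2)/(12*(n:ℝ)^3)))) := by
    rw [Finset.sum_sub_distrib]
    ring
  rw [key, abs_neg]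
  calc |∑ j, (Ebin n (p j) (fun k => ((k:ℝ)/(n:ℝ)) * Real.log ((k:ℝ)/(n:ℝ)))
          - (p j * Real.log (p j)
          + ((1-p j)/(2*(n:ℝ)) - (p j - 1/p j)/(12*(n:ℝ)^2) - (1/p j - 1/(p j)^2)/(12*(n:ℝ)^3))))|
      ≤ ∑ j, |Ebin n (p j) (fun k => ((k:ℝ)/(n:ℝ)) * Real.log ((k:ℝ)/(n:ℝ)))
          - (p j * Real.log (p j)
          + ((1-p j)/(2*(n:ℝ)) - (p j - 1/p j)/(12*(n:ℝ)^2) - (1/p j - 1/(p j)^2)/(12*(n:ℝ)^3)))| :=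
        Finset.abs_sum_le_sum_abs _ _
    _ ≤ ∑ j, Cf j / (n:ℝ)^4 := Finset.sum_le_sum fun j _ => hCf j n hn
    _ = (∑ j, Cf j) / (n:ℝ)^4 := by rw [Finset.sum_div]
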